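/- Let δ be a dissimilarity map on {1,…,n} satisfying the Kalmanson conditions with respect to the identity circular ordering. Let C_1 < C_2 < … < C_m be a partition of {1,…,n} into consecutive intervals, let μ : {1,…,n} → ℝ satisfy μ(i) ≥ 0 and Σ_{i∈C_r} μ(i) = 1 for every r, and define D(r,s) = Σ_{i∈C_r, j∈C_s} μ(i)μ(j)δ(i,j). Suppose r < s < t < u and there exist a ∈ C_r, b ∈ C_s, x ∈ C_t, y ∈ C_u with μ(a), μ(b), μ(x), μ(y) > 0 and δ(a,b) + δ(x,y) < δ(a,x) + δ(b,y). Then D(r,s) + D(t,u) < D(r,t) + D(s,u). -/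
import Mathlib


/-- A dissimilarity map on `{1,…,n}` (modeled as `Fin n`): symmetric,
nonnegative, and zero on the diagonal. -/
def IsDissimilarity {n : ℕ} (δ : Fin n → Fin n → ℝ) : Prop :=
  (∀ i j, δ i j = δ j i) ∧ (∀ i j, 0 ≤ δ i j) ∧ (∀ i, δ i i = 0)

/-- The Kalmanson conditions with respect to the identity circular ordering. -/
def Kalmanson {n : ℕ} (δ : Fin n → Fin n → ℝ) : Prop :=
  ∀ i j k l : Fin n, i < j → j < k → k < l →
    δ i j + δ k l ≤ δ i k + δ j l ∧ δ i l + δ j k ≤ δ i k + δ j l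

/-- The weighted block distance `D(r,s) = Σ_{i∈C_r, j∈C_s} μ(i)μ(j)δ(i,j)`. -/
noncomputable def blockDist {n m : ℕ} (δ : Fin n → Fin n → ℝ)
    (C : Fin m → Finset (Fin n)) (μ : Fin n → ℝ) (r s : Fin m) : ℝ :=
  ∑ i ∈ C r, ∑ j ∈ C s, μ i * μ j * δ i j

lemma one_sum {n : ℕ} (A : Finset (Fin n)) (μ : Fin n → ℝ)
    (hA : ∑ i ∈ A, μ i = 1) (c : ℝ) : ∑ k ∈ A, μ k * c = c := by
  rw [← Finset.sum_mul, hA, one_mul]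

lemma two_sum {n : ℕ} (A B : Finset (Fin n)) (μ : Fin n → ℝ)
    (hA : ∑ i ∈ A, μ i = 1) (hB : ∑ i ∈ B, μ i = 1) (c : ℝ) :
    ∑ k ∈ A, ∑ l ∈ B, μ k * μ l * c = c := by
  calc ∑ k ∈ A, ∑ l ∈ B, μ k * μ l * c
      = ∑ k ∈ A, μ k * c := by
        refine Finset.sum_congr rfl fun k _ => ?_
        calc ∑ l ∈ B, μ k * μ l * c = ∑ l ∈ B, μ l * (μ k * c) :=
              Finset.sum_congr rfl fun l _ => by ring
          _ = μ k * c := one_sum B μ hB _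
    _ = c := one_sum A μ hA c

theorem kalmanson_blocks_strict {n m : ℕ} (δ : Fin n → Fin n → ℝ)
    (hdis : IsDissimilarity δ) (hK : Kalmanson δ)
    (C : Fin m → Finset (Fin n))
    (hne : ∀ r, (C r).Nonempty)
    (hpart : ∀ x : Fin n, ∃! r : Fin m, x ∈ C r)
    (hord : ∀ r s : Fin m, r < s → ∀ i ∈ C r, ∀ j ∈ C s, i < j)
    (μ : Fin n → ℝ) (hμ0 : ∀ i, 0 ≤ μ i) (hμ1 : ∀ r, ∑ i ∈ C r, μ i = 1)
    (r s t u : Fin m) (hrs : r < s) (hst : s < t) (htu : t < u)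
    (a b x y : Fin n) (ha : a ∈ C r) (hb : b ∈ C s) (hx : x ∈ C t) (hy : y ∈ C u)
    (hμa : 0 < μ a) (hμb : 0 < μ b) (hμx : 0 < μ x) (hμy : 0 < μ y)
    (hstrict : δ a b + δ x y < δ a x + δ b y) :
    blockDist δ C μ r s + blockDist δ C μ t u <
      blockDist δ C μ r t + blockDist δ C μ s u := by
  set P : Finset ((Fin n × Fin n) × (Fin n × Fin n)) :=
    ((C r) ×ˢ (C s)) ×ˢ ((C t) ×ˢ (C u)) with hP
  set f : (Fin n × Fin n) × (Fin n × Fin n) → ℝ :=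
    fun p => μ p.1.1 * μ p.1.2 * μ p.2.1 * μ p.2.2 * (δ p.1.1 p.1.2 + δ p.2.1 p.2.2) with hf
  set g : (Fin n × Fin n) × (Fin n × Fin n) → ℝ :=
    fun p => μ p.1.1 * μ p.1.2 * μ p.2.1 * μ p.2.2 * (δ p.1.1 p.2.1 + δ p.1.2 p.2.2) with hg
  have hmem : ∀ p ∈ P, p.1.1 ∈ C r ∧ p.1.2 ∈ C s ∧ p.2.1 ∈ C t ∧ p.2.2 ∈ C u := by
    intro p hp
    simp only [hP, Finset.mem_product] at hp
    exact ⟨hp.1.1, hp.1.2, hp.2.1, hp.2.2⟩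
  have hlt : ∑ p ∈ P, f p < ∑ p ∈ P, g p := by
    apply Finset.sum_lt_sum
    · intro p hp
      obtain ⟨h1, h2, h3, h4⟩ := hmem p hp
      have hij := hord r s hrs _ h1 _ h2
      have hjk := hord s t hst _ h2 _ h3
      have hkl := hord t u htu _ h3 _ h4
      have hkal := (hK _ _ _ _ hij hjk hkl).1
      have hnn : 0 ≤ μ p.1.1 * μ p.1.2 * μ p.2.1 * μ p.2.2 :=
        mul_nonneg (mul_nonneg (mul_nonneg (hμ0 _) (hμ0 _)) (hμ0 _)) (hμ0 _)
      exact mul_le_mul_of_nonneg_left hkal hnn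
    · refine ⟨((a, b), (x, y)), ?_, ?_⟩
      · simp only [hP, Finset.mem_product]
        exact ⟨⟨ha, hb⟩, hx, hy⟩
      · have hpos : 0 < μ a * μ b * μ x * μ y := by positivity
        exact mul_lt_mul_of_pos_left hstrict hpos
  have expand : ∀ h : (Fin n × Fin n) × (Fin n × Fin n) → ℝ,
      ∑ p ∈ P, h p = ∑ i ∈ C r, ∑ j ∈ C s, ∑ k ∈ C t, ∑ l ∈ C u, h ((i, j), (k, l)) := by
    intro h
    rw [hP, Finset.sum_product, Finset.sum_product]
    refine Finset.sum_congr rfl fun i _ => Finset.sum_congr rfl fun j _ => ?_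
    rw [Finset.sum_product]
  have h1 : ∑ i ∈ C r, ∑ j ∈ C s, ∑ k ∈ C t, ∑ l ∈ C u,
      μ i * μ j * μ k * μ l * δ i j = blockDist δ C μ r s := by
    unfold blockDist
    refine Finset.sum_congr rfl fun i _ => Finset.sum_congr rfl fun j _ => ?_
    calc ∑ k ∈ C t, ∑ l ∈ C u, μ i * μ j * μ k * μ l * δ i j
        = ∑ k ∈ C t, ∑ l ∈ C u, μ k * μ l * (μ i * μ j * δ i j) :=
          Finset.sum_congr rfl fun k _ => Finset.sum_congr rfl fun l _ => by ring
      _ = μ i * μ j * δ i j := two_sum _ _ μ (hμ1 t) (hμ1 u) _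
  have h4 : ∑ i ∈ C r, ∑ j ∈ C s, ∑ k ∈ C t, ∑ l ∈ C u,
      μ i * μ j * μ k * μ l * δ k l = blockDist δ C μ t u := by
    calc ∑ i ∈ C r, ∑ j ∈ C s, ∑ k ∈ C t, ∑ l ∈ C u, μ i * μ j * μ k * μ l * δ k l
        = ∑ i ∈ C r, ∑ j ∈ C s, μ i * μ j * (blockDist δ C μ t u) := by
          refine Finset.sum_congr rfl fun i _ => Finset.sum_congr rfl fun j _ => ?_
          unfold blockDist
          rw [Finset.mul_sum]
          refine Finset.sum_congr rfl fun k _ => ?_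
          rw [Finset.mul_sum]
          exact Finset.sum_congr rfl fun l _ => by ring
      _ = blockDist δ C μ t u := two_sum _ _ μ (hμ1 r) (hμ1 s) _
  have h2 : ∑ i ∈ C r, ∑ j ∈ C s, ∑ k ∈ C t, ∑ l ∈ C u,
      μ i * μ j * μ k * μ l * δ i k = blockDist δ C μ r t := by
    unfold blockDist
    refine Finset.sum_congr rfl fun i _ => ?_
    rw [Finset.sum_comm]
    refine Finset.sum_congr rfl fun k _ => ?_
    calc ∑ j ∈ C s, ∑ l ∈ C u, μ i * μ j * μ k * μ l * δ i k
        = ∑ j ∈ C s, ∑ l ∈ C u, μ j * μ l * (μ i * μ k * δ i k) :=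
          Finset.sum_congr rfl fun j _ => Finset.sum_congr rfl fun l _ => by ring
      _ = μ i * μ k * δ i k := two_sum _ _ μ (hμ1 s) (hμ1 u) _
  have h3 : ∑ i ∈ C r, ∑ j ∈ C s, ∑ k ∈ C t, ∑ l ∈ C u,
      μ i * μ j * μ k * μ l * δ j l = blockDist δ C μ s u := by
    calc ∑ i ∈ C r, ∑ j ∈ C s, ∑ k ∈ C t, ∑ l ∈ C u, μ i * μ j * μ k * μ l * δ j l
        = ∑ i ∈ C r, μ i * (blockDist δ C μ s u) := by
          refine Finset.sum_congr rfl fun i _ => ?_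
          unfold blockDist
          rw [Finset.mul_sum]
          refine Finset.sum_congr rfl fun j _ => ?_
          calc ∑ k ∈ C t, ∑ l ∈ C u, μ i * μ j * μ k * μ l * δ j l
              = ∑ l ∈ C u, ∑ k ∈ C t, μ i * μ j * μ k * μ l * δ j l := Finset.sum_comm
            _ = ∑ l ∈ C u, μ i * (μ j * μ l * δ j l) := by
                refine Finset.sum_congr rfl fun l _ => ?_
                calc ∑ k ∈ C t, μ i * μ j * μ k * μ l * δ j l
                    = ∑ k ∈ C t, μ k * (μ i * (μ j * μ l * δ j l)) :=
                      Finset.sum_congr rfl fun k _ => by ring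
                  _ = μ i * (μ j * μ l * δ j l) := one_sum _ μ (hμ1 t) _
            _ = μ i * ∑ l ∈ C u, μ j * μ l * δ j l := by rw [Finset.mul_sum]
      _ = blockDist δ C μ s u := one_sum _ μ (hμ1 r) _
  have hfsum : ∑ p ∈ P, f p = blockDist δ C μ r s + blockDist δ C μ t u := by
    rw [expand f, ← h1, ← h4, ← Finset.sum_add_distrib]
    refine Finset.sum_congr rfl fun i _ => ?_
    rw [← Finset.sum_add_distrib]
    refine Finset.sum_congr rfl fun j _ => ?_
    rw [← Finset.sum_add_distrib]
    refine Finset.sum_congr rfl fun k _ => ?_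
    rw [← Finset.sum_add_distrib]
    exact Finset.sum_congr rfl fun l _ => by simp only [hf]; ring
  have hgsum : ∑ p ∈ P, g p = blockDist δ C μ r t + blockDist δ C μ s u := by
    rw [expand g, ← h2, ← h3, ← Finset.sum_add_distrib]
    refine Finset.sum_congr rfl fun i _ => ?_
    rw [← Finset.sum_add_distrib]
    refine Finset.sum_congr rfl fun j _ => ?_
    rw [← Finset.sum_add_distrib]
    refine Finset.sum_congr rfl fun k _ => ?_
    rw [← Finset.sum_add_distrib]
    exact Finset.sum_congr rfl fun l _ => by simp only [hg]; ring
  rw [← hfsum, ← hgsum]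
  exact hlt
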